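/- Let f, g ∈ ℚ⟦z⟧ be formal power series with zero constant term such that g(f(z)) = z (composition of formal power series). Define a_m := (coefficient of z^m in g) for m ≥ 1, and for k ≥ 0 define A(n,k) := n! · (coefficient of z^n in f^k). Then for all n ≥ 1 and all i with 0 ≤ i ≤ n−1: ∑_{j=i+1}^{n} a_{j−i} · A(n,j) = n · A(n−1, i). -/

import Mathlib

/-- Composition `g(f(z))` of formal power series, for `f` with zero constant term:
the coefficient of `z^n` is `∑_{k=0}^n (coeff k g)·(coeff n f^k)` (for such `f`,
`coeff n (f^k) = 0` whenever `k > n`). -/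
noncomputable def PowerSeries.comp (g f : PowerSeries ℚ) : PowerSeries ℚ :=
  PowerSeries.mk fun n =>
    ∑ k ∈ Finset.range (n + 1), (PowerSeries.coeff k g) * (PowerSeries.coeff n (f ^ k))

open PowerSeries Finset in
/-- If `f, g` have zero constant term and `g(f(z)) = z`, then with
`a_m = coeff m g` and `A(n,k) = n!·coeff n (f^k)` one has
`∑_{j=i+1}^n a_{j-i} A(n,j) = n·A(n-1,i)` for all `n ≥ 1`, `0 ≤ i ≤ n-1`. -/
theorem sum_coeff_comp_eq (f g : PowerSeries ℚ)
    (hf : PowerSeries.constantCoeff f = 0) (hg : PowerSeries.constantCoeff g = 0)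
    (hcomp : PowerSeries.comp g f = PowerSeries.X)
    (n : ℕ) (hn : 1 ≤ n) (i : ℕ) (hi : i ≤ n - 1) :
    ∑ j ∈ Finset.Icc (i + 1) n,
        (PowerSeries.coeff (j - i) g)
          * ((Nat.factorial n : ℚ) * PowerSeries.coeff n (f ^ j))
      = n * ((Nat.factorial (n - 1) : ℚ) * PowerSeries.coeff (n - 1) (f ^ i)) := by
  have hin : i ≤ n - 1 := hi
  have hin' : i + 1 ≤ n := by omega
  have hX : (X : PowerSeries ℚ) ∣ f := PowerSeries.X_dvd_iff.mpr hf
  have hpow : ∀ d k : ℕ, d < k → (coeff d) (f ^ k) = 0 := by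
    intro d k h
    exact PowerSeries.X_pow_dvd_iff.mp (pow_dvd_pow_of_dvd hX k) d h
  -- the truncated series S
  set S : PowerSeries ℚ := ∑ k ∈ range (n + 1), PowerSeries.C ((coeff k) g) * f ^ k with hS
  have hSd : ∀ d ≤ n, (coeff d) S = (coeff d) X := by
    intro d hd
    have h1 : (coeff d) S = ∑ k ∈ range (n + 1), (coeff k g) * (coeff d) (f ^ k) := by
      rw [hS, map_sum]
      exact Finset.sum_congr rfl fun k _ => by rw [coeff_C_mul]
    have h2 : ∑ k ∈ range (n + 1), (coeff k g) * (coeff d) (f ^ k)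
        = ∑ k ∈ range (d + 1), (coeff k g) * (coeff d) (f ^ k) := by
      refine (Finset.sum_subset (by intro k hk; simp_all; omega) ?_).symm
      intro k hk hk'
      simp only [mem_range] at hk hk'
      rw [hpow d k (by omega), mul_zero]
    have h3 : (coeff d) (PowerSeries.comp g f) = (coeff d) X := by rw [hcomp]
    rw [PowerSeries.comp, coeff_mk] at h3
    rw [h1, h2, h3]
  -- key: coeff n (S * f^i) = coeff (n-1) (f^i)
  have key : (coeff n) (S * f ^ i) = (coeff (n - 1)) (f ^ i) := by
    have h1 : (coeff n) (S * f ^ i) = (coeff n) (X * f ^ i) := by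
      rw [coeff_mul, coeff_mul]
      refine Finset.sum_congr rfl fun p hp => ?_
      rw [HasAntidiagonal.mem_antidiagonal] at hp
      rw [hSd p.1 (by omega)]
    rw [h1]
    obtain ⟨m, rfl⟩ : ∃ m, n = m + 1 := ⟨n - 1, by omega⟩
    rw [PowerSeries.coeff_succ_X_mul]
    simp
  -- expand coeff n (S * f^i) the other way
  have expand : (coeff n) (S * f ^ i)
      = ∑ k ∈ range (n + 1), (coeff k g) * (coeff n) (f ^ (k + i)) := by
    rw [hS, Finset.sum_mul, map_sum]
    refine Finset.sum_congr rfl fun k _ => ?_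
    rw [mul_assoc, ← pow_add, coeff_C_mul]
  -- reindex: range (n+1) sum equals Icc (i+1) n sum
  have reindex : ∑ k ∈ range (n + 1), (coeff k g) * (coeff n) (f ^ (k + i))
      = ∑ j ∈ Finset.Icc (i + 1) n, (coeff (j - i) g) * (coeff n) (f ^ j) := by
    have step1 : ∑ k ∈ Finset.Icc 1 (n - i), (coeff k g) * (coeff n) (f ^ (k + i))
        = ∑ k ∈ range (n + 1), (coeff k g) * (coeff n) (f ^ (k + i)) := by
      refine Finset.sum_subset ?_ ?_
      · intro k hk; simp only [Finset.mem_Icc, mem_range] at *; omega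
      · intro k hk hk'
        simp only [Finset.mem_Icc, mem_range, not_and, not_le] at hk hk'
        rcases Nat.eq_zero_or_pos k with h0 | h0
        · subst h0
          rw [PowerSeries.coeff_zero_eq_constantCoeff, hg, zero_mul]
        · rw [hpow n (k + i) (by omega), mul_zero]
    rw [← step1]
    refine Finset.sum_nbij' (fun k => k + i) (fun j => j - i) ?_ ?_ ?_ ?_ ?_
    · intro k hk; simp only [Finset.mem_Icc] at *; omega
    · intro j hj; simp only [Finset.mem_Icc] at *; omega
    · intro k hk; simp
    · intro j hj; simp only [Finset.mem_Icc] at hj; omega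
    · intro k hk; simp
  have hsum : ∑ j ∈ Finset.Icc (i + 1) n, (coeff (j - i) g) * (coeff n) (f ^ j)
      = (coeff (n - 1)) (f ^ i) := by
    rw [← reindex, ← expand, key]
  have hfact : (Nat.factorial n : ℚ) = n * Nat.factorial (n - 1) := by
    obtain ⟨m, rfl⟩ : ∃ m, n = m + 1 := ⟨n - 1, by omega⟩
    simp [Nat.factorial_succ]
  calc ∑ j ∈ Finset.Icc (i + 1) n,
        (coeff (j - i) g) * ((Nat.factorial n : ℚ) * (coeff n) (f ^ j))
      = (Nat.factorial n : ℚ) * ∑ j ∈ Finset.Icc (i + 1) n,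
          (coeff (j - i) g) * (coeff n) (f ^ j) := by
        rw [Finset.mul_sum]; exact Finset.sum_congr rfl fun j _ => by ring
    _ = (Nat.factorial n : ℚ) * (coeff (n - 1)) (f ^ i) := by rw [hsum]
    _ = n * ((Nat.factorial (n - 1) : ℚ) * (coeff (n - 1)) (f ^ i)) := by
        rw [hfact]; ring
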